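/- Pointwise limit of the WZ summand in n: Let a, b be complex numbers with b not a nonpositive integer, and let F(n,k) be as in the WZ-pair for Kummer's theorem (with the same nonvanishing hypotheses). Then for each fixed nonnegative integer k, lim_{n→∞} F(n,k) = 2^b · (b)_k (−1)^k / k!. -/

import Mathlib

open Complex Finset Filter Topology

/-- The Pochhammer symbol `(x)_k = x (x+1) ⋯ (x+k-1)`. -/
noncomputable def poch (x : ℂ) (k : ℕ) : ℂ := (ascPochhammer ℂ k).eval x

/-- The WZ summand for Kummer's theorem:
`F(n,k) = (a+2n)_k (b)_k (-1)^k / ((1+a+2n-b)_k k!) ·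
  Γ(1+a+2n) Γ(1+a/2+n-b) / (Γ(1+a/2+n) Γ(1+a+2n-b))`. -/
noncomputable def kummerF (a b : ℂ) (n k : ℕ) : ℂ :=
  poch (a + 2 * n) k * poch b k * (-1 : ℂ) ^ k /
    (poch (1 + a + 2 * n - b) k * (Nat.factorial k : ℂ)) *
  (Gamma (1 + a + 2 * n) * Gamma (1 + a / 2 + n - b) /
    (Gamma (1 + a / 2 + n) * Gamma (1 + a + 2 * n - b)))

/-- The WZ certificate `C(n,k) = -(b-1)k / ((1+a+2n-b+k)(a+2n))`. -/
noncomputable def kummerC (a b : ℂ) (n k : ℕ) : ℂ :=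
  -((b - 1) * k) / ((1 + a + 2 * n - b + k) * (a + 2 * n))

/-- `G(n,k) = F(n,k) · C(n,k)`. -/
noncomputable def kummerG (a b : ℂ) (n k : ℕ) : ℂ :=
  kummerF a b n k * kummerC a b n k


lemma poch_succ (x : ℂ) (n : ℕ) : poch x (n + 1) = poch x n * (x + n) :=
  ascPochhammer_succ_eval n x

lemma poch_eq_prod (x : ℂ) (k : ℕ) : poch x k = ∏ j ∈ range k, (x + j) := by
  induction k with
  | zero => simp [poch]
  | succ n ih => rw [poch_succ, ih, prod_range_succ]

lemma poch_ne_zero {x : ℂ} (hx : ∀ m : ℕ, x ≠ -m) (k : ℕ) : poch x k ≠ 0 := by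
  rw [poch_eq_prod]
  exact prod_ne_zero_iff.2 fun j _ => by
    have := hx j; intro h; apply this; linear_combination h

lemma Gamma_add_nat' {x : ℂ} (hx : ∀ m : ℕ, x ≠ -m) (n : ℕ) :
    Gamma (x + n) = Gamma x * poch x n := by
  induction n with
  | zero => simp [poch]
  | succ n ih =>
    have hxn : x + n ≠ 0 := by
      have := hx n; intro h; apply this; linear_combination h
    rw [Nat.cast_succ, ← add_assoc, Complex.Gamma_add_one _ hxn, ih, poch_succ]
    ring

lemma alg (Gc Gd Gc' Gd' Pc Pd Pc' Pd' A B A' B' F : ℂ)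
    (hPc' : Pc' ≠ 0) (hPd' : Pd' ≠ 0)
    (hA : A ≠ 0) (hB : B ≠ 0) (hF : F ≠ 0)
    (hAB : A * B = A' * B') :
    Gc * Pc * (Gd * Pd) / (Gc' * Pc' * (Gd' * Pd')) =
      Gc * Gd / (Gc' * Gd') *
        (A' * F / Pc' * (B' * F / Pd') / (A * F / Pc * (B * F / Pd))) := by
  have h1 : A' * F / Pc' * (B' * F / Pd') / (A * F / Pc * (B * F / Pd))
      = (A' * B') * (F * F) * (Pc * Pd) / ((A * B) * (F * F) * (Pc' * Pd')) := by
    field_simp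
  rw [h1, ← hAB, mul_div_mul_left _ _
    (mul_ne_zero (mul_ne_zero hA hB) (mul_ne_zero hF hF) : A * B * (F * F) ≠ 0)]
  field_simp

lemma cpow_nat_ne_zero {n : ℕ} (hn : n ≠ 0) (z : ℂ) : (n : ℂ) ^ z ≠ 0 := by
  rw [Complex.cpow_def_of_ne_zero (Nat.cast_ne_zero.2 hn)]
  exact Complex.exp_ne_zero _

lemma gamma_ratio_tendsto_one {c d c' d' : ℂ}
    (hc : ∀ m : ℕ, c ≠ -m) (hd : ∀ m : ℕ, d ≠ -m)
    (hc' : ∀ m : ℕ, c' ≠ -m) (hd' : ∀ m : ℕ, d' ≠ -m)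
    (hsum : c + d = c' + d') :
    Tendsto (fun n : ℕ => Gamma (c + n) * Gamma (d + n) / (Gamma (c' + n) * Gamma (d' + n)))
      atTop (𝓝 1) := by
  rw [← tendsto_add_atTop_iff_nat 1]
  have hGc := Complex.Gamma_ne_zero hc
  have hGd := Complex.Gamma_ne_zero hd
  have hGc' := Complex.Gamma_ne_zero hc'
  have hGd' := Complex.Gamma_ne_zero hd'
  have hlim : Tendsto (fun n : ℕ => Gamma c * Gamma d / (Gamma c' * Gamma d') *
      (GammaSeq c' n * GammaSeq d' n / (GammaSeq c n * GammaSeq d n))) atTop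
      (𝓝 (Gamma c * Gamma d / (Gamma c' * Gamma d') *
        (Gamma c' * Gamma d' / (Gamma c * Gamma d)))) :=
    tendsto_const_nhds.mul (((Complex.GammaSeq_tendsto_Gamma c').mul
      (Complex.GammaSeq_tendsto_Gamma d')).div ((Complex.GammaSeq_tendsto_Gamma c).mul
      (Complex.GammaSeq_tendsto_Gamma d)) (mul_ne_zero hGc hGd))
  have hval : Gamma c * Gamma d / (Gamma c' * Gamma d') *
      (Gamma c' * Gamma d' / (Gamma c * Gamma d)) = 1 := by
    field_simp
  rw [hval] at hlim
  refine hlim.congr' ?_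
  filter_upwards [eventually_ge_atTop 1] with n hn
  have hn0 : n ≠ 0 := Nat.one_le_iff_ne_zero.mp hn
  have hseq : ∀ z : ℂ, GammaSeq z n = (n : ℂ) ^ z * (n.factorial : ℂ) / poch z (n + 1) := by
    intro z
    rw [Complex.GammaSeq, poch_eq_prod]
  have hAB : (n : ℂ) ^ c * (n : ℂ) ^ d = (n : ℂ) ^ c' * (n : ℂ) ^ d' := by
    rw [← Complex.cpow_add _ _ (Nat.cast_ne_zero.2 hn0),
      ← Complex.cpow_add _ _ (Nat.cast_ne_zero.2 hn0), hsum]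
  rw [hseq, hseq, hseq, hseq, Gamma_add_nat' hc, Gamma_add_nat' hd,
    Gamma_add_nat' hc', Gamma_add_nat' hd']
  exact Eq.symm <| alg _ _ _ _ _ _ _ _ _ _ _ _ _ (poch_ne_zero hc' _) (poch_ne_zero hd' _)
    (cpow_nat_ne_zero hn0 c) (cpow_nat_ne_zero hn0 d)
    (Nat.cast_ne_zero.2 n.factorial_ne_zero) hAB

lemma factor_tendsto (u v : ℂ) (hv : ∀ n : ℕ, v + 2 * (n : ℂ) ≠ 0) :
    Tendsto (fun n : ℕ => (u + 2 * (n : ℂ)) / (v + 2 * (n : ℂ))) atTop (𝓝 1) := by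
  have hnorm : Tendsto (fun n : ℕ => ‖v + 2 * (n : ℂ)‖) atTop atTop := by
    refine tendsto_atTop_mono (fun n => ?_)
      (tendsto_atTop_add_const_right atTop (-‖v‖)
        ((tendsto_natCast_atTop_atTop (R := ℝ)).const_mul_atTop two_pos))
    have h := norm_sub_norm_le (2 * (n : ℂ)) (v + 2 * (n : ℂ))
    have h2 : (2 * (n:ℂ)) - (v + 2 * (n:ℂ)) = -v := by ring
    rw [h2, norm_neg] at h
    have h3 : ‖(2 * (n:ℂ))‖ = 2 * (n:ℝ) := by
      rw [norm_mul]; simp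
    rw [h3] at h
    linarith
  have hcob : Tendsto (fun n : ℕ => v + 2 * (n : ℂ)) atTop (Bornology.cobounded ℂ) :=
    tendsto_norm_atTop_iff_cobounded.1 hnorm
  have hinv : Tendsto (fun n : ℕ => (v + 2 * (n : ℂ))⁻¹) atTop (𝓝 0) :=
    tendsto_inv₀_cobounded.comp hcob
  have hlim : Tendsto (fun n : ℕ => 1 + (u - v) * (v + 2 * (n : ℂ))⁻¹) atTop (𝓝 (1 + (u - v) * 0)) :=
    tendsto_const_nhds.add (tendsto_const_nhds.mul hinv)
  rw [show (1 : ℂ) + (u - v) * 0 = 1 by ring] at hlim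
  refine hlim.congr fun n => ?_
  field_simp [hv n]
  ring

lemma alg2 (G1 G2 Gm Gc Gd Gc' Gd' X1 P R : ℂ)
    (hGm : Gm ≠ 0) (hG2 : G2 ≠ 0) (hGc' : Gc' ≠ 0) (hGd' : Gd' ≠ 0)
    (E1 : Gc * Gm = G1 * X1 * R) (E2 : Gc' * Gd' = G2 * (X1 * P) * R) :
    G1 * Gd / (Gm * G2) = P * (Gc * Gd / (Gc' * Gd')) := by
  rw [mul_div_assoc',
    div_eq_div_iff (mul_ne_zero hGm hG2) (mul_ne_zero hGc' hGd')]
  linear_combination G1 * Gd * E2 - Gd * G2 * P * E1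

lemma ne_neg_nat_of_gamma_ne_zero {z : ℂ} (hz : ∀ n : ℕ, Gamma (z + n) ≠ 0) :
    ∀ m : ℕ, z ≠ -m := by
  intro m h
  apply hz m
  rw [h, neg_add_cancel, Complex.Gamma_zero]

lemma sqrtpi_ne_zero : ((Real.sqrt Real.pi : ℝ) : ℂ) ≠ 0 := by
  rw [Complex.ofReal_ne_zero]
  exact (Real.sqrt_pos.mpr Real.pi_pos).ne'

lemma two_cpow_ne_zero (z : ℂ) : (2 : ℂ) ^ z ≠ 0 := by
  rw [Complex.cpow_def_of_ne_zero two_ne_zero]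
  exact Complex.exp_ne_zero _

/-- From duplication: if `Γ(2s) ≠ 0` then `Γ(s) ≠ 0` and `Γ(s+1/2) ≠ 0`. -/
lemma gamma_half_ne_zero {s : ℂ} (h : Gamma (2 * s) ≠ 0) :
    Gamma s ≠ 0 ∧ Gamma (s + 1 / 2) ≠ 0 := by
  have := Complex.Gamma_mul_Gamma_add_half s
  have hprod : Gamma s * Gamma (s + 1 / 2) ≠ 0 := by
    rw [this]
    exact mul_ne_zero (mul_ne_zero h (two_cpow_ne_zero _)) sqrtpi_ne_zero
  exact ⟨left_ne_zero_of_mul hprod, right_ne_zero_of_mul hprod⟩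

/-- Pointwise limit of the WZ summand in `n`: for `b` not a nonpositive integer,
for each fixed `k`, `F(n,k) → 2^b (b)_k (-1)^k / k!` as `n → ∞`. -/
theorem kummer_WZ_summand_limit (a b : ℂ)
    (hbn : ∀ m : ℕ, b ≠ -(m : ℂ))
    (h2 : ∀ n m : ℕ, 1 + a + 2 * (n : ℂ) - b ≠ -(m : ℂ))
    (h3 : ∀ n : ℕ, Gamma (1 + a + 2 * (n : ℂ)) ≠ 0)
    (h4 : ∀ n : ℕ, Gamma (1 + a / 2 + (n : ℂ) - b) ≠ 0)
    (h5 : ∀ n : ℕ, Gamma (1 + a / 2 + (n : ℂ)) ≠ 0)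
    (h6 : ∀ n : ℕ, Gamma (1 + a + 2 * (n : ℂ) - b) ≠ 0) :
    ∀ k : ℕ,
      Tendsto (fun n : ℕ => kummerF a b n k) atTop
        (𝓝 ((2 : ℂ) ^ b * poch b k * (-1 : ℂ) ^ k / (Nat.factorial k : ℂ))) := by
  intro k
  -- Gamma nonvanishing at the four shifted families (via duplication)
  have hGc : ∀ n : ℕ, Gamma ((1 + a) / 2 + n) ≠ 0 := fun n =>
    (gamma_half_ne_zero (s := (1 + a) / 2 + n)
      (by rw [show (2 : ℂ) * ((1 + a) / 2 + n) = 1 + a + 2 * n by ring]; exact h3 n)).1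
  have hGd : ∀ n : ℕ, Gamma ((1 + a / 2 - b) + n) ≠ 0 := fun n => by
    rw [show ((1 + a / 2 - b) + (n : ℂ)) = 1 + a / 2 + n - b by ring]; exact h4 n
  have hGc' : ∀ n : ℕ, Gamma ((1 + a - b) / 2 + n) ≠ 0 := fun n =>
    (gamma_half_ne_zero (s := (1 + a - b) / 2 + n)
      (by rw [show (2 : ℂ) * ((1 + a - b) / 2 + n) = 1 + a + 2 * n - b by ring]; exact h6 n)).1
  have hGd' : ∀ n : ℕ, Gamma ((1 + (a - b) / 2) + n) ≠ 0 := fun n => by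
    have := (gamma_half_ne_zero (s := (1 + a - b) / 2 + n)
      (by rw [show (2 : ℂ) * ((1 + a - b) / 2 + n) = 1 + a + 2 * n - b by ring]; exact h6 n)).2
    rw [show ((1 + a - b) / 2 + (n : ℂ)) + 1 / 2 = (1 + (a - b) / 2) + n by ring] at this
    exact this
  have hg : Tendsto (fun n : ℕ =>
      Gamma ((1 + a) / 2 + n) * Gamma ((1 + a / 2 - b) + n) /
        (Gamma ((1 + a - b) / 2 + n) * Gamma ((1 + (a - b) / 2) + n))) atTop (𝓝 1) :=
    gamma_ratio_tendsto_one (ne_neg_nat_of_gamma_ne_zero hGc) (ne_neg_nat_of_gamma_ne_zero hGd)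
      (ne_neg_nat_of_gamma_ne_zero hGc') (ne_neg_nat_of_gamma_ne_zero hGd') (by ring)
  -- Gamma ratio identity
  have hr : ∀ n : ℕ,
      Gamma (1 + a + 2 * (n : ℂ)) * Gamma (1 + a / 2 + (n : ℂ) - b) /
        (Gamma (1 + a / 2 + (n : ℂ)) * Gamma (1 + a + 2 * (n : ℂ) - b)) =
      (2 : ℂ) ^ b * (Gamma ((1 + a) / 2 + n) * Gamma ((1 + a / 2 - b) + n) /
        (Gamma ((1 + a - b) / 2 + n) * Gamma ((1 + (a - b) / 2) + n))) := by
    intro n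
    have E1 := Complex.Gamma_mul_Gamma_add_half ((1 + a) / 2 + n)
    rw [show ((1 + a) / 2 + (n : ℂ)) + 1 / 2 = 1 + a / 2 + n by ring,
      show (2 : ℂ) * ((1 + a) / 2 + n) = 1 + a + 2 * n by ring] at E1
    have E2 := Complex.Gamma_mul_Gamma_add_half ((1 + a - b) / 2 + n)
    rw [show ((1 + a - b) / 2 + (n : ℂ)) + 1 / 2 = (1 + (a - b) / 2) + n by ring,
      show (2 : ℂ) * ((1 + a - b) / 2 + n) = 1 + a + 2 * n - b by ring] at E2
    have hX : (2 : ℂ) ^ (1 - (1 + a + 2 * (n : ℂ))) * (2 : ℂ) ^ b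
        = (2 : ℂ) ^ (1 - (1 + a + 2 * (n : ℂ) - b)) := by
      rw [← Complex.cpow_add _ _ two_ne_zero]; congr 1; ring
    rw [← hX] at E2
    rw [show Gamma (1 + a / 2 + (n : ℂ) - b) = Gamma ((1 + a / 2 - b) + (n : ℂ)) by
      congr 1; ring]
    exact alg2 _ _ _ _ _ _ _ _ _ _ (h5 n) (h6 n) (hGc' n) (hGd' n) E1 E2
  -- rational factor tends to 1
  have hQ : Tendsto (fun n : ℕ => poch (a + 2 * n) k / poch (1 + a + 2 * n - b) k)
      atTop (𝓝 1) := by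
    have hprod : Tendsto (fun n : ℕ => ∏ j ∈ range k,
        ((a + 2 * (n : ℂ) + j) / (1 + a + 2 * (n : ℂ) - b + j))) atTop
        (𝓝 (∏ _j ∈ range k, (1 : ℂ))) := by
      refine tendsto_finset_prod _ fun j _ => ?_
      have hv : ∀ n : ℕ, (1 + a - b + (j : ℂ)) + 2 * (n : ℂ) ≠ 0 := fun n h =>
        h2 n j (by linear_combination h)
      exact (factor_tendsto (a + j) (1 + a - b + j) hv).congr fun n => by ring
    rw [Finset.prod_const_one] at hprod
    refine hprod.congr fun n => ?_
    rw [poch_eq_prod, poch_eq_prod, ← Finset.prod_div_distrib]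
  have hmain := (hQ.mul ((tendsto_const_nhds :
      Tendsto (fun _ : ℕ => (2 : ℂ) ^ b) atTop (𝓝 ((2 : ℂ) ^ b))).mul hg)).mul_const
    (poch b k * (-1 : ℂ) ^ k / (Nat.factorial k : ℂ))
  rw [show (1 : ℂ) * ((2 : ℂ) ^ b * 1) * (poch b k * (-1 : ℂ) ^ k / (Nat.factorial k : ℂ))
      = (2 : ℂ) ^ b * poch b k * (-1 : ℂ) ^ k / (Nat.factorial k : ℂ) by ring] at hmain
  refine hmain.congr fun n => ?_
  simp only [kummerF]
  rw [hr n]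
  ring
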